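/- For every integer n ≥ 2, the Mycielskian of the path P_n satisfies C(μ(P_n)) = (9n² + 95n + 14)/16 and B⁻(μ(P_n)) = (4n² − 6n + 8)/(2n + 3). -/

import Mathlib

open SimpleGraph Polynomial Finset

/-- The Mycielskian `μ(G)` of a simple graph `G`. Vertices `Sum.inl v` are the original
vertices `v_i`, vertices `Sum.inr (Sum.inl v)` are the shadow vertices `u_i`, and
`Sum.inr (Sum.inr ())` is the apex vertex `w`.  Edges: the edges of `G`, the edges `w u_i`,
and the edges `u_i v_j`, `u_j v_i` for every edge `v_i v_j` of `G`. -/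
def mycielskian {V : Type*} (G : SimpleGraph V) : SimpleGraph (V ⊕ V ⊕ Unit) :=
  SimpleGraph.fromRel (fun a b =>
    match a, b with
    | Sum.inl a, Sum.inl b => G.Adj a b
    | Sum.inl a, Sum.inr (Sum.inl b) => G.Adj a b
    | Sum.inr (Sum.inl _), Sum.inr (Sum.inr _) => True
    | _, _ => False)

/-- `distCount G k` is `d(G,k)`, the number of unordered pairs of distinct vertices of `G`
whose graph distance is exactly `k`. -/
noncomputable def distCount {V : Type*} (G : SimpleGraph V) (k : ℕ) : ℕ :=
  Nat.card {e : Sym2 V // ¬ e.IsDiag ∧ Sym2.lift ⟨G.dist, fun _ _ => G.dist_comm⟩ e = k}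

/-- The Hosoya polynomial `H(G,x) = Σ_{k=1}^{D(G)} d(G,k) x^k` (with rational coefficients). -/
noncomputable def hosoya {V : Type*} (G : SimpleGraph V) : Polynomial ℚ :=
  ∑ k ∈ Finset.Icc 1 G.diam, (distCount G k : ℚ) • Polynomial.X ^ k

/-- The Wiener index `W(G)`: the sum of distances over all unordered pairs of distinct
vertices (the diagonal contributes `0`, so we may sum over ordered pairs and halve). -/
noncomputable def wiener {V : Type*} (G : SimpleGraph V) [Fintype V] : ℚ :=
  (∑ u : V, ∑ v : V, (G.dist u v : ℚ)) / 2

/-- The Hyper-Wiener index `WW(G) = (1/2) Σ_{{u,v}} (d(u,v)² + d(u,v))`. -/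
noncomputable def hyperWiener {V : Type*} (G : SimpleGraph V) [Fintype V] : ℚ :=
  (∑ u : V, ∑ v : V, ((G.dist u v : ℚ) ^ 2 + (G.dist u v : ℚ))) / 4

/-- The TSZ index `TSZ(G) = (1/6) Σ_{{u,v}} d³ + (1/2) Σ_{{u,v}} d² + (1/3) Σ_{{u,v}} d`. -/
noncomputable def tszIndex {V : Type*} (G : SimpleGraph V) [Fintype V] : ℚ :=
  (∑ u : V, ∑ v : V, (G.dist u v : ℚ) ^ 3) / 12
    + (∑ u : V, ∑ v : V, (G.dist u v : ℚ) ^ 2) / 4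
    + (∑ u : V, ∑ v : V, (G.dist u v : ℚ)) / 6

/-- The Harary index `Har(G) = Σ_{{u,v}} 1/d(u,v)` (diagonal terms are `0⁻¹ = 0`). -/
noncomputable def harary {V : Type*} (G : SimpleGraph V) [Fintype V] : ℚ :=
  (∑ u : V, ∑ v : V, ((G.dist u v : ℚ))⁻¹) / 2

/-- The closeness `C(G) = Σ_u Σ_{v ≠ u} 2^{-d(u,v)}` over ordered pairs of distinct vertices. -/
noncomputable def closeness {V : Type*} (G : SimpleGraph V) [Fintype V] : ℚ :=
  letI := Classical.decEq V
  ∑ u : V, ∑ v : V, if v = u then 0 else ((1 : ℚ) / 2) ^ (G.dist u v)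

/-- `σ_{uv}`: the number of shortest paths (walks of length `dist u v`) from `u` to `v`. -/
noncomputable def numSP {V : Type*} (G : SimpleGraph V) (u v : V) : ℕ :=
  Nat.card {p : G.Walk u v // p.length = G.dist u v}

/-- `σ_{uv}(w)`: the number of shortest paths from `u` to `v` passing through `w`. -/
noncomputable def numSPthrough {V : Type*} (G : SimpleGraph V) (w u v : V) : ℕ :=
  Nat.card {p : G.Walk u v // p.length = G.dist u v ∧ w ∈ p.support}

/-- The betweenness centrality `B_w = Σ_{{u,v}, u ≠ w ≠ v} σ_{uv}(w)/σ_{uv}` of a vertex `w`,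
summed over unordered pairs of distinct vertices (ordered pairs, halved). -/
noncomputable def btwVertex {V : Type*} (G : SimpleGraph V) [Fintype V] (w : V) : ℚ :=
  letI := Classical.decEq V
  (∑ u : V, ∑ v : V,
    if u ≠ v ∧ u ≠ w ∧ v ≠ w then (numSPthrough G w u v : ℚ) / (numSP G u v) else 0) / 2

/-- The betweenness centrality of a graph: `B⁻(G) = (1/N) Σ_w B_w`. -/
noncomputable def btw {V : Type*} (G : SimpleGraph V) [Fintype V] : ℚ :=
  (∑ w : V, btwVertex G w) / (Fintype.card V)

/-- The star graph `S_n`: center `0` joined to the `n` leaves `1, …, n`. -/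
def starGraph (n : ℕ) : SimpleGraph (Fin (n + 1)) :=
  SimpleGraph.fromRel (fun a _ => a = 0)

/-- The join `G₁ ⊕ G₂` of two graphs on disjoint vertex sets: all edges of `G₁`, all edges
of `G₂`, and all edges between `V(G₁)` and `V(G₂)`. -/
def joinGraph {V₁ V₂ : Type*} (G₁ : SimpleGraph V₁) (G₂ : SimpleGraph V₂) :
    SimpleGraph (V₁ ⊕ V₂) :=
  SimpleGraph.fromRel (fun a b =>
    match a, b with
    | Sum.inl a, Sum.inl b => G₁.Adj a b
    | Sum.inr a, Sum.inr b => G₂.Adj a b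
    | Sum.inl _, Sum.inr _ => True
    | _, _ => False)

section dist
variable {n : ℕ}

/-- auxiliary distance profile for v-u pairs -/
def fD (k : ℕ) : ℕ := if k = 1 then 1 else if k ≤ 2 then 2 else 3

/-- claimed distance function on the Mycielskian of the path -/
def myD : (Fin (n+1) ⊕ Fin (n+1) ⊕ Unit) → (Fin (n+1) ⊕ Fin (n+1) ⊕ Unit) → ℕ
  | Sum.inl i, Sum.inl j => min (Nat.dist i.val j.val) 4
  | Sum.inl i, Sum.inr (Sum.inl j) => fD (Nat.dist i.val j.val)
  | Sum.inr (Sum.inl i), Sum.inl j => fD (Nat.dist i.val j.val)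
  | Sum.inl _, Sum.inr (Sum.inr _) => 2
  | Sum.inr (Sum.inr _), Sum.inl _ => 2
  | Sum.inr (Sum.inl i), Sum.inr (Sum.inl j) => if i = j then 0 else 2
  | Sum.inr (Sum.inl _), Sum.inr (Sum.inr _) => 1
  | Sum.inr (Sum.inr _), Sum.inr (Sum.inl _) => 1
  | Sum.inr (Sum.inr _), Sum.inr (Sum.inr _) => 0

local notation "MG" => mycielskian (SimpleGraph.pathGraph (n+1))

lemma madj_vv {i j : Fin (n+1)} :
    (MG).Adj (Sum.inl i) (Sum.inl j) ↔ Nat.dist i.val j.val = 1 := by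
  simp only [mycielskian, fromRel_adj, pathGraph_adj, or_false, false_or, Nat.dist]
  constructor
  · rintro ⟨h, h2⟩; omega
  · intro h
    have : i.val ≠ j.val := by omega
    refine ⟨by simp [Fin.ext_iff, this], ?_⟩
    omega

lemma madj_vu {i j : Fin (n+1)} :
    (MG).Adj (Sum.inl i) (Sum.inr (Sum.inl j)) ↔ Nat.dist i.val j.val = 1 := by
  simp only [mycielskian, fromRel_adj, pathGraph_adj, or_false, false_or, Nat.dist]
  constructor
  · rintro ⟨h, h2⟩; omega
  · intro h
    refine ⟨by simp, ?_⟩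
    omega

lemma madj_uw {i : Fin (n+1)} {u : Unit} :
    (MG).Adj (Sum.inr (Sum.inl i)) (Sum.inr (Sum.inr u)) := by
  simp only [mycielskian, fromRel_adj]
  exact ⟨by simp, Or.inl trivial⟩

lemma madj_cases {a b : Fin (n+1) ⊕ Fin (n+1) ⊕ Unit} (h : (MG).Adj a b) :
    (∃ i j, a = Sum.inl i ∧ b = Sum.inl j ∧ Nat.dist i.val j.val = 1) ∨
    (∃ i j, a = Sum.inl i ∧ b = Sum.inr (Sum.inl j) ∧ Nat.dist i.val j.val = 1) ∨
    (∃ i j, a = Sum.inr (Sum.inl i) ∧ b = Sum.inl j ∧ Nat.dist i.val j.val = 1) ∨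
    (∃ i u, a = Sum.inr (Sum.inl i) ∧ b = Sum.inr (Sum.inr u)) ∨
    (∃ i u, a = Sum.inr (Sum.inr u) ∧ b = Sum.inr (Sum.inl i)) := by
  rcases a with i | i | u <;> rcases b with j | j | u'
  · exact Or.inl ⟨i, j, rfl, rfl, madj_vv.mp h⟩
  · exact Or.inr (Or.inl ⟨i, j, rfl, rfl, madj_vu.mp h⟩)
  · exfalso; simp only [mycielskian, fromRel_adj] at h; exact h.2.elim id id
  · refine Or.inr (Or.inr (Or.inl ⟨i, j, rfl, rfl, ?_⟩))
    have := madj_vu.mp h.symm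
    rwa [Nat.dist_comm] at this
  · exfalso; simp only [mycielskian, fromRel_adj] at h
    rcases h.2 with h2 | h2 <;> exact h2
  · exact Or.inr (Or.inr (Or.inr (Or.inl ⟨i, u', rfl, rfl⟩)))
  · exfalso; simp only [mycielskian, fromRel_adj] at h; exact h.2.elim id id
  · exact Or.inr (Or.inr (Or.inr (Or.inr ⟨j, u, rfl, rfl⟩)))
  · exfalso; simp only [mycielskian, fromRel_adj] at h; exact h.2.elim id id

lemma myD_self (a : Fin (n+1) ⊕ Fin (n+1) ⊕ Unit) : myD a a = 0 := by
  rcases a with i | i | u <;> simp [myD, Nat.dist_self]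

lemma myD_step {a c b : Fin (n+1) ⊕ Fin (n+1) ⊕ Unit} (h : (MG).Adj a c) :
    myD a b ≤ myD c b + 1 := by
  rcases madj_cases h with ⟨i, j, rfl, rfl, hd⟩ | ⟨i, j, rfl, rfl, hd⟩ |
    ⟨i, j, rfl, rfl, hd⟩ | ⟨i, u, rfl, rfl⟩ | ⟨i, u, rfl, rfl⟩ <;>
    rcases b with k | k | u' <;>
    simp only [myD, fD, Nat.dist] at * <;>
    grind

lemma myD_le_walk {a b : Fin (n+1) ⊕ Fin (n+1) ⊕ Unit} (p : (MG).Walk a b) :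
    myD a b ≤ p.length := by
  induction p with
  | nil => simp [myD_self]
  | cons h q ih =>
    calc myD _ _ ≤ myD _ _ + 1 := myD_step h
    _ ≤ q.length + 1 := by omega
    _ = _ := by simp

end dist

section dist2
variable {n : ℕ}
local notation "MG" => mycielskian (SimpleGraph.pathGraph (n+1))

lemma exists_nb (hn : 1 ≤ n) (i : Fin (n+1)) :
    ∃ i' : Fin (n+1), Nat.dist i'.val i.val = 1 := by
  by_cases h : i.val = 0
  · exact ⟨⟨1, by omega⟩, by simp [Nat.dist, h]⟩
  · refine ⟨⟨i.val - 1, by have := i.isLt; omega⟩, ?_⟩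
    simp only [Nat.dist]; omega

lemma walk_vv : ∀ (k : ℕ) (i j : Fin (n+1)), Nat.dist i.val j.val = k →
    ∃ p : (MG).Walk (Sum.inl i) (Sum.inl j), p.length = k := by
  intro k
  induction k with
  | zero =>
    intro i j h
    have : i = j := Fin.ext (by simp only [Nat.dist] at h; omega)
    subst this
    exact ⟨SimpleGraph.Walk.nil, rfl⟩
  | succ k ih =>
    intro i j h
    have hne : i.val ≠ j.val := by simp only [Nat.dist] at h ⊢; omega
    by_cases hij : i.val < j.val
    · have hjlt := j.isLt
      set i' : Fin (n+1) := ⟨i.val + 1, by omega⟩ with hi'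
      have hadj : (MG).Adj (Sum.inl i) (Sum.inl i') := madj_vv.mpr (by
        simp only [Nat.dist, hi']; omega)
      obtain ⟨p, hp⟩ := ih i' j (by simp only [Nat.dist, hi'] at h ⊢; omega)
      exact ⟨SimpleGraph.Walk.cons hadj p, by simp [hp]⟩
    · have hilt := i.isLt
      set i' : Fin (n+1) := ⟨i.val - 1, by omega⟩ with hi'
      have hadj : (MG).Adj (Sum.inl i) (Sum.inl i') := madj_vv.mpr (by
        simp only [Nat.dist, hi']; omega)
      obtain ⟨p, hp⟩ := ih i' j (by simp only [Nat.dist, hi'] at h ⊢; omega)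
      exact ⟨SimpleGraph.Walk.cons hadj p, by simp [hp]⟩

lemma mg_connected (hn : 1 ≤ n) : (MG).Connected := by
  rw [SimpleGraph.connected_iff]
  refine ⟨fun a b => ?_, ⟨Sum.inr (Sum.inr ())⟩⟩
  have hub : ∀ a : Fin (n+1) ⊕ Fin (n+1) ⊕ Unit,
      (MG).Reachable a (Sum.inr (Sum.inr ())) := by
    intro a
    rcases a with i | i | u
    · obtain ⟨i', hi'⟩ := exists_nb hn i
      have h1 : (MG).Adj (Sum.inl i) (Sum.inr (Sum.inl i')) :=
        madj_vu.mpr (by rwa [Nat.dist_comm] at hi')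
      exact h1.reachable.trans madj_uw.reachable
    · exact madj_uw.reachable
    · rfl
  exact (hub a).trans (hub b).symm

lemma adj_dist_le {a b : Fin (n+1) ⊕ Fin (n+1) ⊕ Unit} (h : (MG).Adj a b) :
    (MG).dist a b ≤ 1 := by
  have := SimpleGraph.dist_le h.toWalk
  simpa using this

lemma myD_comm (a b : Fin (n+1) ⊕ Fin (n+1) ⊕ Unit) : myD a b = myD b a := by
  rcases a with i | i | u <;> rcases b with j | j | u' <;>
    simp [myD, Nat.dist_comm, eq_comm]

lemma dist_uv_le (hn : 2 ≤ n) (i j : Fin (n+1)) :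
    (MG).dist (Sum.inl i) (Sum.inr (Sum.inl j)) ≤ fD (Nat.dist i.val j.val) := by
  have hconn := mg_connected (by omega : 1 ≤ n)
  have hjlt := j.isLt; have hilt := i.isLt
  rcases Nat.lt_or_ge (Nat.dist i.val j.val) 3 with hd | hd
  · interval_cases hdd : (Nat.dist i.val j.val)
    · -- i = j, distance 2 via a common neighbour
      have hij : i = j := Fin.ext (by simp only [Nat.dist] at hdd; omega)
      subst hij
      obtain ⟨i', hi'⟩ := exists_nb (by omega) i
      have h1 : (MG).Adj (Sum.inl i) (Sum.inl i') := madj_vv.mpr (by rwa [Nat.dist_comm] at hi')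
      have h2 : (MG).Adj (Sum.inl i') (Sum.inr (Sum.inl i)) := madj_vu.mpr hi'
      calc (MG).dist (Sum.inl i) (Sum.inr (Sum.inl i))
          ≤ (MG).dist (Sum.inl i) (Sum.inl i') +
            (MG).dist (Sum.inl i') (Sum.inr (Sum.inl i)) := hconn.dist_triangle
        _ ≤ 1 + 1 := Nat.add_le_add (adj_dist_le h1) (adj_dist_le h2)
        _ ≤ fD 0 := by simp [fD]
    · exact le_trans (adj_dist_le (madj_vu.mpr hdd)) (by simp [fD])
    · -- distance 2 via middle vertex
      have hne : i.val ≠ j.val := by simp only [Nat.dist] at hdd; omega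
      rcases Nat.lt_or_ge i.val j.val with hij | hij
      · set m : Fin (n+1) := ⟨i.val + 1, by omega⟩ with hm
        have h1 : (MG).Adj (Sum.inl i) (Sum.inl m) :=
          madj_vv.mpr (by simp only [Nat.dist, hm]; omega)
        have h2 : (MG).Adj (Sum.inl m) (Sum.inr (Sum.inl j)) :=
          madj_vu.mpr (by simp only [Nat.dist, hm] at hdd ⊢; omega)
        calc (MG).dist (Sum.inl i) (Sum.inr (Sum.inl j))
            ≤ (MG).dist (Sum.inl i) (Sum.inl m) +
              (MG).dist (Sum.inl m) (Sum.inr (Sum.inl j)) := hconn.dist_triangle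
          _ ≤ 1 + 1 := Nat.add_le_add (adj_dist_le h1) (adj_dist_le h2)
          _ ≤ fD 2 := by simp [fD]
      · set m : Fin (n+1) := ⟨i.val - 1, by omega⟩ with hm
        have h1 : (MG).Adj (Sum.inl i) (Sum.inl m) :=
          madj_vv.mpr (by simp only [Nat.dist, hm] at hdd ⊢; omega)
        have h2 : (MG).Adj (Sum.inl m) (Sum.inr (Sum.inl j)) :=
          madj_vu.mpr (by simp only [Nat.dist, hm] at hdd ⊢; omega)
        calc (MG).dist (Sum.inl i) (Sum.inr (Sum.inl j))
            ≤ (MG).dist (Sum.inl i) (Sum.inl m) +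
              (MG).dist (Sum.inl m) (Sum.inr (Sum.inl j)) := hconn.dist_triangle
          _ ≤ 1 + 1 := Nat.add_le_add (adj_dist_le h1) (adj_dist_le h2)
          _ ≤ fD 2 := by simp [fD]
  · -- distance at most 3 via the apex
    obtain ⟨i', hi'⟩ := exists_nb (by omega) i
    have h1 : (MG).Adj (Sum.inl i) (Sum.inr (Sum.inl i')) :=
      madj_vu.mpr (by rwa [Nat.dist_comm] at hi')
    have h2 : (MG).Adj (Sum.inr (Sum.inl i')) (Sum.inr (Sum.inr ())) := madj_uw
    have h3 : (MG).Adj (Sum.inr (Sum.inr ())) (Sum.inr (Sum.inl j)) := madj_uw.symm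
    calc (MG).dist (Sum.inl i) (Sum.inr (Sum.inl j))
        ≤ (MG).dist (Sum.inl i) (Sum.inr (Sum.inl i')) +
          (MG).dist (Sum.inr (Sum.inl i')) (Sum.inr (Sum.inl j)) := hconn.dist_triangle
      _ ≤ 1 + ((MG).dist (Sum.inr (Sum.inl i')) (Sum.inr (Sum.inr ())) +
          (MG).dist (Sum.inr (Sum.inr ())) (Sum.inr (Sum.inl j))) :=
          Nat.add_le_add (adj_dist_le h1) hconn.dist_triangle
      _ ≤ 1 + (1 + 1) := by
          exact Nat.add_le_add le_rfl (Nat.add_le_add (adj_dist_le h2) (adj_dist_le h3))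
      _ ≤ fD (Nat.dist i.val j.val) := by
          have : ¬ (Nat.dist i.val j.val = 1) := by omega
          have h2' : ¬ (Nat.dist i.val j.val ≤ 2) := by omega
          simp [fD, this, h2']

lemma dist_vw_le (hn : 2 ≤ n) (i : Fin (n+1)) :
    (MG).dist (Sum.inl i) (Sum.inr (Sum.inr ())) ≤ 2 := by
  have hconn := mg_connected (by omega : 1 ≤ n)
  obtain ⟨i', hi'⟩ := exists_nb (by omega) i
  have h1 : (MG).Adj (Sum.inl i) (Sum.inr (Sum.inl i')) :=
    madj_vu.mpr (by rwa [Nat.dist_comm] at hi')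
  calc (MG).dist (Sum.inl i) (Sum.inr (Sum.inr ()))
      ≤ (MG).dist (Sum.inl i) (Sum.inr (Sum.inl i')) +
        (MG).dist (Sum.inr (Sum.inl i')) (Sum.inr (Sum.inr ())) := hconn.dist_triangle
    _ ≤ 1 + 1 := Nat.add_le_add (adj_dist_le h1) (adj_dist_le madj_uw)

lemma dist_le_myD (hn : 2 ≤ n) (a b : Fin (n+1) ⊕ Fin (n+1) ⊕ Unit) :
    (MG).dist a b ≤ myD a b := by
  have hconn := mg_connected (by omega : 1 ≤ n)
  have key_vv4 : ∀ i j : Fin (n+1), (MG).dist (Sum.inl i) (Sum.inl j) ≤ 4 := by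
    intro i j
    obtain ⟨i', hi'⟩ := exists_nb (by omega) i
    obtain ⟨j', hj'⟩ := exists_nb (by omega) j
    have h1 : (MG).Adj (Sum.inl i) (Sum.inr (Sum.inl i')) :=
      madj_vu.mpr (by rwa [Nat.dist_comm] at hi')
    have h4 : (MG).Adj (Sum.inr (Sum.inl j')) (Sum.inl j) :=
      (madj_vu.mpr (by rwa [Nat.dist_comm] at hj')).symm
    calc (MG).dist (Sum.inl i) (Sum.inl j)
        ≤ (MG).dist (Sum.inl i) (Sum.inr (Sum.inl i')) +
          (MG).dist (Sum.inr (Sum.inl i')) (Sum.inl j) := hconn.dist_triangle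
      _ ≤ 1 + ((MG).dist (Sum.inr (Sum.inl i')) (Sum.inr (Sum.inr ())) +
          ((MG).dist (Sum.inr (Sum.inr ())) (Sum.inr (Sum.inl j')) +
            (MG).dist (Sum.inr (Sum.inl j')) (Sum.inl j))) := by
          refine Nat.add_le_add (adj_dist_le h1)
            (le_trans (hconn.dist_triangle (v := Sum.inr (Sum.inr ()))) ?_)
          exact Nat.add_le_add le_rfl (hconn.dist_triangle (v := Sum.inr (Sum.inl j')))
      _ ≤ 1 + (1 + (1 + 1)) := by
          refine Nat.add_le_add le_rfl (Nat.add_le_add (adj_dist_le madj_uw)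
            (Nat.add_le_add (adj_dist_le madj_uw.symm) (adj_dist_le h4)))
      _ ≤ 4 := by norm_num
  rcases a with i | i | u <;> rcases b with j | j | u'
  · -- v-v
    show (MG).dist (Sum.inl i) (Sum.inl j) ≤ min (Nat.dist i.val j.val) 4
    rcases Nat.le_total (Nat.dist i.val j.val) 4 with hd | hd
    · obtain ⟨p, hp⟩ := walk_vv (Nat.dist i.val j.val) i j rfl
      rw [Nat.min_eq_left hd, ← hp]
      exact SimpleGraph.dist_le p
    · rw [Nat.min_eq_right hd]; exact key_vv4 i j
  · exact dist_uv_le hn i j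
  · cases u'; exact dist_vw_le hn i
  · show (MG).dist _ _ ≤ fD (Nat.dist i.val j.val)
    rw [SimpleGraph.dist_comm, Nat.dist_comm]
    exact dist_uv_le hn j i
  · -- u-u
    show (MG).dist _ _ ≤ if i = j then 0 else 2
    by_cases hij : i = j
    · simp [hij, SimpleGraph.dist_self]
    · rw [if_neg hij]
      calc (MG).dist (Sum.inr (Sum.inl i)) (Sum.inr (Sum.inl j))
          ≤ (MG).dist (Sum.inr (Sum.inl i)) (Sum.inr (Sum.inr ())) +
            (MG).dist (Sum.inr (Sum.inr ())) (Sum.inr (Sum.inl j)) := hconn.dist_triangle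
        _ ≤ 1 + 1 := Nat.add_le_add (adj_dist_le madj_uw) (adj_dist_le madj_uw.symm)
  · exact adj_dist_le madj_uw
  · cases u; rw [SimpleGraph.dist_comm]; exact dist_vw_le hn j
  · exact adj_dist_le madj_uw.symm
  · cases u; cases u'; simp [SimpleGraph.dist_self, myD]

theorem mg_dist_eq (hn : 2 ≤ n) (a b : Fin (n+1) ⊕ Fin (n+1) ⊕ Unit) :
    (MG).dist a b = myD a b := by
  refine le_antisymm (dist_le_myD hn a b) ?_
  obtain ⟨p, hp⟩ := (mg_connected (by omega : 1 ≤ n)).exists_walk_length_eq_dist a b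
  rw [← hp]
  exact myD_le_walk p

end dist2

section sums

lemma row_sum (g : ℕ → ℚ) (c : ℚ) (hg : ∀ k, 4 ≤ k → g k = c) :
    ∀ n : ℕ, 2 ≤ n → ∑ j : Fin (n+1), g ((n+1) - j.val)
      = g 1 + g 2 + g 3 + ((n : ℚ) - 2) * c := by
  intro n hn
  induction n, hn using Nat.le_induction with
  | base =>
    rw [Fin.sum_univ_three]
    norm_num
    ring
  | succ n hn ih =>
    rw [Fin.sum_univ_succ]
    have h0 : ((0 : Fin (n+2)) : ℕ) = 0 := rfl
    have hstep : ∀ j : Fin (n+1), (n+1+1) - ((j.succ : Fin (n+2)) : ℕ) = (n+1) - (j : ℕ) := by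
      intro j; simp [Fin.val_succ]
    have heq : ∑ j : Fin (n+1), g ((n+1+1) - ((j.succ : Fin (n+2)) : ℕ))
        = ∑ j : Fin (n+1), g ((n+1) - (j : ℕ)) :=
      Finset.sum_congr rfl (fun j _ => by rw [hstep])
    rw [h0, heq, ih, show n+1+1-0 = n+2 by omega, hg (n+2) (by omega)]
    push_cast
    ring

lemma dd_sum (g : ℕ → ℚ) (c : ℚ) (hg : ∀ k, 4 ≤ k → g k = c) :
    ∀ n : ℕ, 2 ≤ n → ∑ i : Fin (n+1), ∑ j : Fin (n+1), g (Nat.dist i.val j.val)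
      = ((n : ℚ)+1) * g 0 + 2*((n : ℚ) * g 1 + ((n : ℚ)-1) * g 2 + ((n : ℚ)-2) * g 3)
        + ((n : ℚ)-2)*((n : ℚ)-3)*c := by
  intro n hn
  induction n, hn using Nat.le_induction with
  | base =>
    rw [Fin.sum_univ_three, Fin.sum_univ_three, Fin.sum_univ_three, Fin.sum_univ_three]
    norm_num [Nat.dist]
    ring
  | succ n hn ih =>
    have hrow : ∑ j : Fin (n+1), g (Nat.dist (n+1) j.val)
        = g 1 + g 2 + g 3 + ((n : ℚ) - 2) * c := by
      rw [← row_sum g c hg n hn]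
      refine Finset.sum_congr rfl (fun j _ => ?_)
      have := j.isLt
      congr 1
      simp only [Nat.dist]; omega
    have hrow2 : ∑ i : Fin (n+1), g (Nat.dist i.val (n+1))
        = g 1 + g 2 + g 3 + ((n : ℚ) - 2) * c := by
      rw [← hrow]
      exact Finset.sum_congr rfl (fun i _ => by rw [Nat.dist_comm])
    have hinner : ∀ i : Fin (n+1+1), ∑ j : Fin (n+1+1), g (Nat.dist i.val j.val)
        = (∑ j : Fin (n+1), g (Nat.dist i.val j.val)) + g (Nat.dist i.val (n+1)) := by
      intro i
      rw [Fin.sum_univ_castSucc]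
      simp [Fin.coe_castSucc, Fin.val_last]
    calc ∑ i : Fin (n+1+1), ∑ j : Fin (n+1+1), g (Nat.dist i.val j.val)
        = ∑ i : Fin (n+1+1),
            ((∑ j : Fin (n+1), g (Nat.dist i.val j.val)) + g (Nat.dist i.val (n+1))) :=
          Finset.sum_congr rfl (fun i _ => hinner i)
      _ = (∑ i : Fin (n+1+1), ∑ j : Fin (n+1), g (Nat.dist i.val j.val))
            + ∑ i : Fin (n+1+1), g (Nat.dist i.val (n+1)) := Finset.sum_add_distrib
      _ = ((∑ i : Fin (n+1), ∑ j : Fin (n+1), g (Nat.dist i.val j.val))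
            + ∑ j : Fin (n+1), g (Nat.dist (n+1) j.val))
            + ((∑ i : Fin (n+1), g (Nat.dist i.val (n+1))) + g (Nat.dist (n+1) (n+1))) := by
          have houter : ∑ i : Fin (n+1+1), ∑ j : Fin (n+1), g (Nat.dist i.val j.val)
              = (∑ i : Fin (n+1), ∑ j : Fin (n+1), g (Nat.dist i.val j.val))
                + ∑ j : Fin (n+1), g (Nat.dist (n+1) j.val) := by
            rw [Fin.sum_univ_castSucc]
            simp [Fin.coe_castSucc, Fin.val_last]
          have hcol : ∑ i : Fin (n+1+1), g (Nat.dist i.val (n+1))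
              = (∑ i : Fin (n+1), g (Nat.dist i.val (n+1))) + g (Nat.dist (n+1) (n+1)) := by
            rw [Fin.sum_univ_castSucc]
            simp [Fin.coe_castSucc, Fin.val_last]
          rw [houter, hcol]
      _ = (((n : ℚ)+1) * g 0 + 2*((n : ℚ) * g 1 + ((n : ℚ)-1) * g 2 + ((n : ℚ)-2) * g 3)
            + ((n : ℚ)-2)*((n : ℚ)-3)*c
            + (g 1 + g 2 + g 3 + ((n : ℚ) - 2) * c))
            + ((g 1 + g 2 + g 3 + ((n : ℚ) - 2) * c) + g 0) := by
          rw [ih, hrow, hrow2, Nat.dist_self]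
      _ = ((((n:ℕ)+1 : ℕ) : ℚ)+1) * g 0
            + 2*((((n:ℕ)+1 : ℕ) : ℚ) * g 1 + ((((n:ℕ)+1 : ℕ) : ℚ)-1) * g 2
              + ((((n:ℕ)+1 : ℕ) : ℚ)-2) * g 3)
            + ((((n:ℕ)+1 : ℕ) : ℚ)-2)*((((n:ℕ)+1 : ℕ) : ℚ)-3)*c := by
          push_cast
          ring

end sums

section btwlemmas
variable {V : Type*} [Fintype V] {G : SimpleGraph V}

lemma numSP_pos (hconn : G.Connected) (u v : V) : numSP G u v ≠ 0 := by
  classical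
  haveI : ∀ w : V, Fintype (G.neighborSet w) := fun w => Fintype.ofFinite _
  rw [numSP, Nat.card_ne_zero]
  obtain ⟨p, hp⟩ := hconn.exists_walk_length_eq_dist u v
  exact ⟨⟨⟨p, hp⟩⟩, inferInstance⟩

lemma sum_through_nat (hconn : G.Connected) (u v : V) (huv : u ≠ v) :
    letI := Classical.decEq V
    ∑ w : V, (if u ≠ w ∧ v ≠ w then numSPthrough G w u v else 0)
      = (G.dist u v - 1) * numSP G u v := by
  letI := Classical.decEq V
  haveI : ∀ w : V, Fintype (G.neighborSet w) := fun w => Fintype.ofFinite _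
  set d := G.dist u v with hd
  -- rewrite numSPthrough as a filter card over the fintype of shortest walks
  have hth : ∀ w : V, numSPthrough G w u v
      = (Finset.univ.filter
          (fun q : {p : G.Walk u v // p.length = d} => w ∈ q.1.support)).card := by
    intro w
    rw [numSPthrough]
    have e : {p : G.Walk u v // p.length = d ∧ w ∈ p.support}
        ≃ {q : {p : G.Walk u v // p.length = d} // w ∈ q.1.support} :=
      { toFun := fun p => ⟨⟨p.1, p.2.1⟩, p.2.2⟩
        invFun := fun q => ⟨q.1.1, q.1.2, q.2⟩
        left_inv := fun p => rfl
        right_inv := fun q => rfl }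
    rw [Nat.card_congr e, Nat.card_eq_fintype_card, Fintype.card_subtype]
  have hsp : numSP G u v = Fintype.card {p : G.Walk u v // p.length = d} := by
    rw [numSP, Nat.card_eq_fintype_card]
  calc ∑ w : V, (if u ≠ w ∧ v ≠ w then numSPthrough G w u v else 0)
      = ∑ w : V, ∑ q : {p : G.Walk u v // p.length = d},
          (if (u ≠ w ∧ v ≠ w) ∧ w ∈ q.1.support then 1 else 0) := by
        refine Finset.sum_congr rfl (fun w _ => ?_)
        by_cases hc : u ≠ w ∧ v ≠ w
        · rw [if_pos hc, hth w, Finset.card_filter]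
          refine Finset.sum_congr rfl (fun q _ => ?_)
          simp [hc]
        · rw [if_neg hc]
          refine (Finset.sum_eq_zero (fun q _ => ?_)).symm
          simp [hc]
    _ = ∑ q : {p : G.Walk u v // p.length = d}, ∑ w : V,
          (if (u ≠ w ∧ v ≠ w) ∧ w ∈ q.1.support then 1 else 0) := Finset.sum_comm
    _ = ∑ q : {p : G.Walk u v // p.length = d}, (d - 1) := by
        refine Finset.sum_congr rfl (fun q _ => ?_)
        have hpath : q.1.IsPath := q.1.isPath_of_length_eq_dist (by rw [q.2])
        have hnodup : q.1.support.Nodup := hpath.support_nodup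
        have hcard : q.1.support.toFinset.card = d + 1 := by
          rw [List.toFinset_card_of_nodup hnodup, SimpleGraph.Walk.length_support, q.2]
        have husup : u ∈ q.1.support.toFinset := by
          simp [SimpleGraph.Walk.start_mem_support]
        have hvsup : v ∈ q.1.support.toFinset := by
          simp [SimpleGraph.Walk.end_mem_support]
        calc ∑ w : V, (if (u ≠ w ∧ v ≠ w) ∧ w ∈ q.1.support then 1 else 0)
            = (Finset.univ.filter
                (fun w => (u ≠ w ∧ v ≠ w) ∧ w ∈ q.1.support)).card := by
              rw [Finset.card_filter]
          _ = (q.1.support.toFinset \ {u, v}).card := by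
              congr 1
              ext w
              simp only [Finset.mem_filter, Finset.mem_univ, true_and,
                Finset.mem_sdiff, List.mem_toFinset, Finset.mem_insert,
                Finset.mem_singleton]
              tauto
          _ = d - 1 := by
              rw [Finset.card_sdiff_of_subset (by
                intro x hx
                simp only [Finset.mem_insert, Finset.mem_singleton] at hx
                rcases hx with rfl | rfl
                · exact husup
                · exact hvsup)]
              rw [hcard, Finset.card_insert_of_notMem (by simp [huv]),
                Finset.card_singleton]
              omega
    _ = (d - 1) * numSP G u v := by
        rw [Finset.sum_const, hsp, smul_eq_mul, mul_comm, Finset.card_univ]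

lemma sum_through (hconn : G.Connected) (u v : V) (huv : u ≠ v) :
    letI := Classical.decEq V
    ∑ w : V, (if u ≠ v ∧ u ≠ w ∧ v ≠ w
        then (numSPthrough G w u v : ℚ) / (numSP G u v) else 0)
      = (G.dist u v : ℚ) - 1 := by
  letI := Classical.decEq V
  have hσ : (numSP G u v : ℚ) ≠ 0 := Nat.cast_ne_zero.mpr (numSP_pos hconn u v)
  have hd1 : 1 ≤ G.dist u v := hconn.pos_dist_of_ne huv
  calc ∑ w : V, (if u ≠ v ∧ u ≠ w ∧ v ≠ w
          then (numSPthrough G w u v : ℚ) / (numSP G u v) else 0)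
      = (∑ w : V, (if u ≠ w ∧ v ≠ w then (numSPthrough G w u v : ℚ) else 0))
          / (numSP G u v) := by
        rw [Finset.sum_div]
        refine Finset.sum_congr rfl (fun w _ => ?_)
        by_cases hc : u ≠ w ∧ v ≠ w
        · rw [if_pos ⟨huv, hc⟩, if_pos hc]
        · rw [if_neg (by tauto), if_neg hc, zero_div]
    _ = ((G.dist u v - 1 : ℕ) * numSP G u v : ℕ) / (numSP G u v : ℚ) := by
        rw [← sum_through_nat hconn u v huv]
        push_cast
        refine congrArg (· / ((numSP G u v : ℚ))) ?_
        refine Finset.sum_congr rfl (fun w _ => ?_)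
        split_ifs <;> simp
    _ = (G.dist u v : ℚ) - 1 := by
        push_cast [hd1]
        rw [mul_div_assoc, div_self hσ, mul_one]

end btwlemmas

section assemble
variable {V : Type*} [Fintype V] {G : SimpleGraph V}

lemma btw_eq (hconn : G.Connected) :
    btw G = ((∑ u : V, ∑ v : V, (G.dist u v : ℚ))
      - Fintype.card V * (Fintype.card V - 1)) / (2 * Fintype.card V) := by
  letI := Classical.decEq V
  have hsum : ∑ w : V, btwVertex G w
      = (∑ u : V, ∑ v : V, (if u ≠ v then (G.dist u v : ℚ) - 1 else 0)) / 2 := by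
    simp only [btwVertex]
    rw [← Finset.sum_div]
    congr 1
    calc ∑ w : V, ∑ u : V, ∑ v : V,
          (if u ≠ v ∧ u ≠ w ∧ v ≠ w
            then (numSPthrough G w u v : ℚ) / (numSP G u v) else 0)
        = ∑ u : V, ∑ w : V, ∑ v : V,
          (if u ≠ v ∧ u ≠ w ∧ v ≠ w
            then (numSPthrough G w u v : ℚ) / (numSP G u v) else 0) := Finset.sum_comm
      _ = ∑ u : V, ∑ v : V, ∑ w : V,
          (if u ≠ v ∧ u ≠ w ∧ v ≠ w
            then (numSPthrough G w u v : ℚ) / (numSP G u v) else 0) :=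
          Finset.sum_congr rfl (fun u _ => Finset.sum_comm)
      _ = ∑ u : V, ∑ v : V, (if u ≠ v then (G.dist u v : ℚ) - 1 else 0) := by
          refine Finset.sum_congr rfl (fun u _ => Finset.sum_congr rfl (fun v _ => ?_))
          by_cases huv : u = v
          · subst huv
            rw [if_neg (by simp)]
            exact Finset.sum_eq_zero (fun w _ => by rw [if_neg (by tauto)])
          · rw [if_pos huv, sum_through hconn u v huv]
  have hdiag : ∑ u : V, ∑ v : V, (if u ≠ v then (G.dist u v : ℚ) - 1 else 0)
      = (∑ u : V, ∑ v : V, (G.dist u v : ℚ))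
        - Fintype.card V * (Fintype.card V - 1) := by
    have h1 : ∀ u v : V, (if u ≠ v then (G.dist u v : ℚ) - 1 else 0)
        = (G.dist u v : ℚ) - (if u ≠ v then 1 else 0) := by
      intro u v
      by_cases huv : u = v
      · subst huv; simp [SimpleGraph.dist_self]
      · simp [huv]
    simp only [h1]
    rw [Finset.sum_congr rfl (fun u _ => Finset.sum_sub_distrib _ _),
      Finset.sum_sub_distrib]
    congr 1
    have h2 : ∀ u : V, ∑ v : V, (if u ≠ v then (1:ℚ) else 0)
        = Fintype.card V - 1 := by
      intro u
      calc ∑ v : V, (if u ≠ v then (1:ℚ) else 0)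
          = ∑ v : V, ((1:ℚ) - (if u = v then 1 else 0)) :=
            Finset.sum_congr rfl (fun v _ => by by_cases h : u = v <;> simp [h])
        _ = Fintype.card V - 1 := by
            rw [Finset.sum_sub_distrib, Finset.sum_ite_eq Finset.univ u (fun _ => (1:ℚ))]
            simp [Finset.card_univ, mul_comm]
    rw [Finset.sum_congr rfl (fun u _ => h2 u), Finset.sum_const, Finset.card_univ,
      nsmul_eq_mul]
  rw [show btw G = (∑ w : V, btwVertex G w) / (Fintype.card V) from rfl, hsum, hdiag]
  ring

lemma closeness_eq :
    closeness G = (∑ u : V, ∑ v : V, ((1:ℚ)/2) ^ (G.dist u v)) - Fintype.card V := by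
  letI := Classical.decEq V
  rw [closeness]
  have h1 : ∀ u : V, ∑ v : V, (if v = u then 0 else ((1:ℚ)/2) ^ (G.dist u v))
      = (∑ v : V, ((1:ℚ)/2) ^ (G.dist u v)) - 1 := by
    intro u
    have : ∀ v : V, (if v = u then 0 else ((1:ℚ)/2) ^ (G.dist u v))
        = ((1:ℚ)/2) ^ (G.dist u v) - (if v = u then ((1:ℚ)/2) ^ (G.dist u v) else 0) := by
      intro v
      by_cases hv : v = u <;> simp [hv]
    simp only [this]
    rw [Finset.sum_sub_distrib, Finset.sum_ite_eq' Finset.univ u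
      (fun v => ((1:ℚ)/2) ^ (G.dist u v))]
    simp [SimpleGraph.dist_self]
  rw [Finset.sum_congr rfl (fun u _ => h1 u), Finset.sum_sub_distrib]
  simp [Finset.card_univ, mul_comm]

end assemble

section final
variable {n : ℕ}
local notation "MG" => mycielskian (SimpleGraph.pathGraph (n+1))

abbrev MV (n : ℕ) := Fin (n+1) ⊕ Fin (n+1) ⊕ Unit

lemma split1 (f : MV n → ℚ) :
    ∑ a : MV n, f a = (∑ i : Fin (n+1), f (Sum.inl i))
      + (∑ i : Fin (n+1), f (Sum.inr (Sum.inl i))) + f (Sum.inr (Sum.inr ())) := by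
  rw [Fintype.sum_sum_type, Fintype.sum_sum_type]
  rw [show ∑ u : Unit, f (Sum.inr (Sum.inr u)) = f (Sum.inr (Sum.inr ())) from
    Fintype.sum_unique _]
  ring

lemma split2 (F : MV n → MV n → ℚ) :
    ∑ a : MV n, ∑ b : MV n, F a b
      = (∑ i : Fin (n+1), ∑ j : Fin (n+1), F (Sum.inl i) (Sum.inl j))
      + (∑ i : Fin (n+1), ∑ j : Fin (n+1), F (Sum.inl i) (Sum.inr (Sum.inl j)))
      + (∑ i : Fin (n+1), F (Sum.inl i) (Sum.inr (Sum.inr ())))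
      + (∑ i : Fin (n+1), ∑ j : Fin (n+1), F (Sum.inr (Sum.inl i)) (Sum.inl j))
      + (∑ i : Fin (n+1), ∑ j : Fin (n+1), F (Sum.inr (Sum.inl i)) (Sum.inr (Sum.inl j)))
      + (∑ i : Fin (n+1), F (Sum.inr (Sum.inl i)) (Sum.inr (Sum.inr ())))
      + (∑ j : Fin (n+1), F (Sum.inr (Sum.inr ())) (Sum.inl j))
      + (∑ j : Fin (n+1), F (Sum.inr (Sum.inr ())) (Sum.inr (Sum.inl j)))
      + F (Sum.inr (Sum.inr ())) (Sum.inr (Sum.inr ())) := by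
  rw [split1 (fun a => ∑ b : MV n, F a b)]
  rw [Finset.sum_congr rfl (fun i _ => split1 (F (Sum.inl i))),
    Finset.sum_congr rfl (fun i _ => split1 (F (Sum.inr (Sum.inl i)))),
    split1 (F (Sum.inr (Sum.inr ())))]
  rw [Finset.sum_add_distrib, Finset.sum_add_distrib, Finset.sum_add_distrib,
    Finset.sum_add_distrib]
  ring

theorem mg_closeness (hn : 2 ≤ n) :
    closeness (MG) = (9 * (n : ℚ) ^ 2 + 95 * n + 14) / 16 := by
  have hb1 : ∀ i j : Fin (n+1), (MG).dist (Sum.inl i) (Sum.inl j)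
      = min (Nat.dist i.val j.val) 4 := fun i j => mg_dist_eq hn _ _
  have hb2 : ∀ i j : Fin (n+1), (MG).dist (Sum.inl i) (Sum.inr (Sum.inl j))
      = fD (Nat.dist i.val j.val) := fun i j => mg_dist_eq hn _ _
  have hb3 : ∀ i : Fin (n+1), (MG).dist (Sum.inl i) (Sum.inr (Sum.inr ())) = 2 :=
    fun i => mg_dist_eq hn _ _
  have hb4 : ∀ i j : Fin (n+1), (MG).dist (Sum.inr (Sum.inl i)) (Sum.inl j)
      = fD (Nat.dist i.val j.val) := fun i j => mg_dist_eq hn _ _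
  have hb5 : ∀ i j : Fin (n+1), (MG).dist (Sum.inr (Sum.inl i)) (Sum.inr (Sum.inl j))
      = (if Nat.dist i.val j.val = 0 then 0 else 2) := by
    intro i j
    rw [mg_dist_eq hn]
    show (if i = j then 0 else 2) = _
    by_cases h : i = j
    · subst h; rw [if_pos rfl, if_pos (Nat.dist_self _)]
    · rw [if_neg h, if_neg (by
        simp only [Nat.dist]
        rw [Fin.ext_iff] at h
        omega)]
  have hb6 : ∀ i : Fin (n+1), (MG).dist (Sum.inr (Sum.inl i)) (Sum.inr (Sum.inr ())) = 1 :=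
    fun i => mg_dist_eq hn _ _
  have hb7 : ∀ j : Fin (n+1), (MG).dist (Sum.inr (Sum.inr ())) (Sum.inl j) = 2 :=
    fun j => mg_dist_eq hn _ _
  have hb8 : ∀ j : Fin (n+1), (MG).dist (Sum.inr (Sum.inr ())) (Sum.inr (Sum.inl j)) = 1 :=
    fun j => mg_dist_eq hn _ _
  have hb9 : (MG).dist (Sum.inr (Sum.inr ())) (Sum.inr (Sum.inr ())) = 0 :=
    SimpleGraph.dist_self
  have hcard : (Fintype.card (Fin (n+1) ⊕ Fin (n+1) ⊕ Unit) : ℚ) = 2*(n : ℚ)+3 := by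
    simp [Fintype.card_sum]
    push_cast
    ring
  rw [closeness_eq, split2 (fun a b => ((1:ℚ)/2) ^ ((MG).dist a b))]
  -- evaluate the nine blocks
  have e1 : ∑ i : Fin (n+1), ∑ j : Fin (n+1), ((1:ℚ)/2) ^ ((MG).dist (Sum.inl i) (Sum.inl j))
      = ((n:ℚ)+1) * 1 + 2*((n:ℚ)*(1/2) + ((n:ℚ)-1)*(1/4) + ((n:ℚ)-2)*(1/8))
        + ((n:ℚ)-2)*((n:ℚ)-3)*(1/16) := by
    simp only [hb1]
    rw [dd_sum (fun k => ((1:ℚ)/2) ^ (min k 4)) ((1:ℚ)/16)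
      (fun k hk => by
        show ((1:ℚ)/2) ^ (min k 4) = _
        rw [Nat.min_eq_right hk]; norm_num) n hn]
    norm_num
  have e2 : ∀ F : Fin (n+1) → Fin (n+1) → ℚ,
      (∀ i j, F i j = ((1:ℚ)/2) ^ (fD (Nat.dist i.val j.val))) →
      ∑ i : Fin (n+1), ∑ j : Fin (n+1), F i j
      = ((n:ℚ)+1) * (1/4) + 2*((n:ℚ)*(1/2) + ((n:ℚ)-1)*(1/4) + ((n:ℚ)-2)*(1/8))
        + ((n:ℚ)-2)*((n:ℚ)-3)*(1/8) := by
    intro F hF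
    simp only [hF]
    rw [dd_sum (fun k => ((1:ℚ)/2) ^ (fD k)) ((1:ℚ)/8)
      (fun k hk => by
        show ((1:ℚ)/2) ^ (fD k) = _
        rw [show fD k = 3 by simp only [fD]; split_ifs <;> omega]
        norm_num) n hn]
    norm_num [fD]
  have e5 : ∑ i : Fin (n+1), ∑ j : Fin (n+1),
        ((1:ℚ)/2) ^ ((MG).dist (Sum.inr (Sum.inl i)) (Sum.inr (Sum.inl j)))
      = ((n:ℚ)+1) * 1 + 2*((n:ℚ)*(1/4) + ((n:ℚ)-1)*(1/4) + ((n:ℚ)-2)*(1/4))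
        + ((n:ℚ)-2)*((n:ℚ)-3)*(1/4) := by
    simp only [hb5]
    rw [dd_sum (fun k => ((1:ℚ)/2) ^ (if k = 0 then 0 else 2)) ((1:ℚ)/4)
      (fun k hk => by
        show ((1:ℚ)/2) ^ (if k = 0 then 0 else 2) = _
        rw [if_neg (by omega)]; norm_num) n hn]
    norm_num
  rw [e1, e2 _ (fun i j => by rw [hb2]), e2 _ (fun i j => by rw [hb4]), e5]
  simp only [hb3, hb6, hb7, hb8, hb9]
  simp only [Finset.sum_const, Finset.card_univ, Fintype.card_fin, nsmul_eq_mul]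
  rw [hcard]
  push_cast
  field_simp
  ring

theorem mg_btw (hn : 2 ≤ n) :
    btw (MG) = (4 * (n : ℚ) ^ 2 - 6 * n + 8) / (2 * n + 3) := by
  have hconn := mg_connected (by omega : 1 ≤ n)
  have hb1 : ∀ i j : Fin (n+1), (MG).dist (Sum.inl i) (Sum.inl j)
      = min (Nat.dist i.val j.val) 4 := fun i j => mg_dist_eq hn _ _
  have hb2 : ∀ i j : Fin (n+1), (MG).dist (Sum.inl i) (Sum.inr (Sum.inl j))
      = fD (Nat.dist i.val j.val) := fun i j => mg_dist_eq hn _ _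
  have hb3 : ∀ i : Fin (n+1), (MG).dist (Sum.inl i) (Sum.inr (Sum.inr ())) = 2 :=
    fun i => mg_dist_eq hn _ _
  have hb4 : ∀ i j : Fin (n+1), (MG).dist (Sum.inr (Sum.inl i)) (Sum.inl j)
      = fD (Nat.dist i.val j.val) := fun i j => mg_dist_eq hn _ _
  have hb5 : ∀ i j : Fin (n+1), (MG).dist (Sum.inr (Sum.inl i)) (Sum.inr (Sum.inl j))
      = (if Nat.dist i.val j.val = 0 then 0 else 2) := by
    intro i j
    rw [mg_dist_eq hn]
    show (if i = j then 0 else 2) = _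
    by_cases h : i = j
    · subst h; rw [if_pos rfl, if_pos (Nat.dist_self _)]
    · rw [if_neg h, if_neg (by
        simp only [Nat.dist]
        rw [Fin.ext_iff] at h
        omega)]
  have hb6 : ∀ i : Fin (n+1), (MG).dist (Sum.inr (Sum.inl i)) (Sum.inr (Sum.inr ())) = 1 :=
    fun i => mg_dist_eq hn _ _
  have hb7 : ∀ j : Fin (n+1), (MG).dist (Sum.inr (Sum.inr ())) (Sum.inl j) = 2 :=
    fun j => mg_dist_eq hn _ _
  have hb8 : ∀ j : Fin (n+1), (MG).dist (Sum.inr (Sum.inr ())) (Sum.inr (Sum.inl j)) = 1 :=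
    fun j => mg_dist_eq hn _ _
  have hb9 : (MG).dist (Sum.inr (Sum.inr ())) (Sum.inr (Sum.inr ())) = 0 :=
    SimpleGraph.dist_self
  have hcard : (Fintype.card (Fin (n+1) ⊕ Fin (n+1) ⊕ Unit) : ℚ) = 2*(n : ℚ)+3 := by
    simp [Fintype.card_sum]
    push_cast
    ring
  rw [btw_eq hconn, split2 (fun a b => (((MG).dist a b : ℕ) : ℚ))]
  have e1 : ∑ i : Fin (n+1), ∑ j : Fin (n+1),
        (((MG).dist (Sum.inl i) (Sum.inl j) : ℕ) : ℚ)
      = ((n:ℚ)+1) * 0 + 2*((n:ℚ)*1 + ((n:ℚ)-1)*2 + ((n:ℚ)-2)*3)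
        + ((n:ℚ)-2)*((n:ℚ)-3)*4 := by
    simp only [hb1]
    rw [dd_sum (fun k => ((min k 4 : ℕ) : ℚ)) (4 : ℚ)
      (fun k hk => by
        show (((min k 4 : ℕ)) : ℚ) = _
        rw [Nat.min_eq_right hk]; norm_num) n hn]
    norm_num
  have e2 : ∀ F : Fin (n+1) → Fin (n+1) → ℚ,
      (∀ i j, F i j = ((fD (Nat.dist i.val j.val) : ℕ) : ℚ)) →
      ∑ i : Fin (n+1), ∑ j : Fin (n+1), F i j
      = ((n:ℚ)+1) * 2 + 2*((n:ℚ)*1 + ((n:ℚ)-1)*2 + ((n:ℚ)-2)*3)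
        + ((n:ℚ)-2)*((n:ℚ)-3)*3 := by
    intro F hF
    simp only [hF]
    rw [dd_sum (fun k => ((fD k : ℕ) : ℚ)) (3 : ℚ)
      (fun k hk => by
        show (((fD k : ℕ)) : ℚ) = _
        rw [show fD k = 3 by simp only [fD]; split_ifs <;> omega]
        norm_num) n hn]
    norm_num [fD]
  have e5 : ∑ i : Fin (n+1), ∑ j : Fin (n+1),
        (((MG).dist (Sum.inr (Sum.inl i)) (Sum.inr (Sum.inl j)) : ℕ) : ℚ)
      = ((n:ℚ)+1) * 0 + 2*((n:ℚ)*2 + ((n:ℚ)-1)*2 + ((n:ℚ)-2)*2)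
        + ((n:ℚ)-2)*((n:ℚ)-3)*2 := by
    simp only [hb5]
    rw [dd_sum (fun k => (((if k = 0 then 0 else 2 : ℕ)) : ℚ)) (2 : ℚ)
      (fun k hk => by
        show (((if k = 0 then 0 else 2 : ℕ)) : ℚ) = _
        rw [if_neg (by omega)]; norm_num) n hn]
    norm_num
  rw [e1, e2 _ (fun i j => by rw [hb2]), e2 _ (fun i j => by rw [hb4]), e5]
  simp only [hb3, hb6, hb7, hb8, hb9]
  simp only [Finset.sum_const, Finset.card_univ, Fintype.card_fin, nsmul_eq_mul]
  rw [hcard]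
  push_cast
  have h2n3 : (2*(n:ℚ)+3) ≠ 0 := by positivity
  field_simp
  ring

end final


/-- For `n ≥ 2`, the Mycielskian of the path `P_n` (on `n+1` vertices)
satisfies `C(μ(P_n)) = (9n² + 95n + 14)/16` and `B⁻(μ(P_n)) = (4n² - 6n + 8)/(2n+3)`. -/
theorem stmt_17 (n : ℕ) (hn : 2 ≤ n) :
    closeness (mycielskian (SimpleGraph.pathGraph (n + 1))) =
      (9 * (n : ℚ) ^ 2 + 95 * n + 14) / 16 ∧
    btw (mycielskian (SimpleGraph.pathGraph (n + 1))) =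
      (4 * (n : ℚ) ^ 2 - 6 * n + 8) / (2 * n + 3) := by
  exact ⟨mg_closeness hn, mg_btw hn⟩
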